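/- For every nonzero polynomial v in the ideal ⟨f_1,…,f_d⟩, there exists a TRB pair p such that lm(p) divides lm(v). Consequently the set of polynomial parts { v' : (u',v') is a TRB pair } is a Gröbner basis of ⟨f_1,…,f_d⟩ with respect to ≺_m. -/

import Mathlib

namespace TRB

open MvPolynomial
open scoped Classical

/-- Monomials in the variables `x₁, …, xₙ`, identified with their exponent vectors;
a monomial `m₁` divides `m₂` iff the exponent vector of `m₁` is componentwise `≤`. -/
abbrev Mon (n : ℕ) := Fin n →₀ ℕ

/-- Module monomials (signatures) `x^α E_i` of the free module `P^d`. -/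
abbrev Sig (n d : ℕ) := Mon n × Fin d

/-- The action of a monomial on a module monomial: `m • (x^α E_i) = (m x^α) E_i`. -/
noncomputable def Sig.smul {n d : ℕ} (m : Mon n) (s : Sig n d) : Sig n d := (m + s.1, s.2)

/-- An admissible monomial order on the monomials of `P = K[x₁,…,xₙ]`:
a (strict) linear order such that `1 ⪯ m` for every monomial `m`, and
multiplication by a monomial is strictly monotone. -/
structure MonOrder (n : ℕ) where
  lt : Mon n → Mon n → Prop
  irrefl : ∀ a, ¬ lt a a
  trans : ∀ a b c, lt a b → lt b c → lt a c
  total : ∀ a b, lt a b ∨ a = b ∨ lt b a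
  zero_lt : ∀ a, a ≠ 0 → lt 0 a
  mul_lt_mul : ∀ (m a b : Mon n), lt a b → lt (m + a) (m + b)

/-- An admissible signature order on module monomials:
a (strict) linear order with `s ⪯ m • s` for every monomial `m`, and such that
multiplication by a monomial is strictly monotone. -/
structure SigOrder (n d : ℕ) where
  lt : Sig n d → Sig n d → Prop
  irrefl : ∀ s, ¬ lt s s
  trans : ∀ s t r, lt s t → lt t r → lt s r
  total : ∀ s t, lt s t ∨ s = t ∨ lt t s
  le_smul : ∀ (m : Mon n) (s : Sig n d), s = Sig.smul m s ∨ lt s (Sig.smul m s)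
  smul_lt_smul : ∀ (m : Mon n) (s t : Sig n d), lt s t → lt (Sig.smul m s) (Sig.smul m t)

/-- Non-strict version of a monomial order. -/
def MonOrder.le {n : ℕ} (mo : MonOrder n) (a b : Mon n) : Prop := mo.lt a b ∨ a = b

/-- Non-strict version of a signature order. -/
def SigOrder.le {n d : ℕ} (so : SigOrder n d) (s t : Sig n d) : Prop := so.lt s t ∨ s = t

/-- The `≺_m`-leading monomial of a polynomial (junk value `0` on the zero polynomial). -/
noncomputable def MonOrder.lm {n : ℕ} {K : Type*} [CommSemiring K] (mo : MonOrder n)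
    (v : MvPolynomial (Fin n) K) : Mon n :=
  if h : ∃ m ∈ v.support, ∀ m' ∈ v.support, m' ≠ m → mo.lt m' m then h.choose else 0

/-- The signature of a module element `u ∈ P^d`: the `≺_s`-largest module monomial
`x^α E_i` whose coefficient in `u` is nonzero (junk value on `u = 0`). -/
noncomputable def SigOrder.sig {n d : ℕ} [NeZero d] {K : Type*} [CommSemiring K]
    (so : SigOrder n d) (u : Fin d → MvPolynomial (Fin n) K) : Sig n d :=
  if h : ∃ s : Sig n d, (u s.2).coeff s.1 ≠ 0 ∧
      ∀ t : Sig n d, (u t.2).coeff t.1 ≠ 0 → t ≠ s → so.lt t s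
  then h.choose else (0, ⟨0, Nat.pos_of_ne_zero (NeZero.ne d)⟩)

/-- The ambient type of candidate pairs `(u, v) ∈ P^d × P`. -/
abbrev PairT (K : Type*) [CommSemiring K] (n d : ℕ) :=
  (Fin d → MvPolynomial (Fin n) K) × MvPolynomial (Fin n) K

variable {K : Type*} [Field K] {n d : ℕ}

/-- `(u, v)` is a pair (w.r.t. the input `f`) if `u ⬝ f = Σ_i u_i f_i = v`. -/
def IsPair (f : Fin d → MvPolynomial (Fin n) K) (p : PairT K n d) : Prop :=
  ∑ i, p.1 i * f i = p.2

/-- Leading monomial of a pair: `lm p = lm v`. -/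
noncomputable def lmP (mo : MonOrder n) (p : PairT K n d) : Mon n := mo.lm p.2

/-- Signature of a pair: `sig p = sig u`. -/
noncomputable def sigP [NeZero d] (so : SigOrder n d) (p : PairT K n d) : Sig n d :=
  so.sig p.1

/-- The pair order: `p ≺_p q` iff `lm(p)·sig(q) ≺_s lm(q)·sig(p)`. -/
def PairLt [NeZero d] (mo : MonOrder n) (so : SigOrder n d) (p q : PairT K n d) : Prop :=
  so.lt (Sig.smul (lmP mo p) (sigP so q)) (Sig.smul (lmP mo q) (sigP so p))

/-- Pairs are similar if `lm(p)·sig(q) = lm(q)·sig(p)`. -/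
def Similar [NeZero d] (mo : MonOrder n) (so : SigOrder n d) (p q : PairT K n d) : Prop :=
  Sig.smul (lmP mo p) (sigP so q) = Sig.smul (lmP mo q) (sigP so p)

/-- `p ⪯_p q`. -/
def PairLE [NeZero d] (mo : MonOrder n) (so : SigOrder n d) (p q : PairT K n d) : Prop :=
  PairLt mo so p q ∨ Similar mo so p q

/-- Pairs are equivalent if they have the same signature and the same leading monomial. -/
def Equivalent [NeZero d] (mo : MonOrder n) (so : SigOrder n d) (p q : PairT K n d) : Prop :=
  sigP so p = sigP so q ∧ lmP mo p = lmP mo q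

/-- `p` is top reducible by `q`: both non-syzygy, `p ≺_p q` and `lm(q) ∣ lm(p)`. -/
def TopRed [NeZero d] (mo : MonOrder n) (so : SigOrder n d) (p q : PairT K n d) : Prop :=
  p.2 ≠ 0 ∧ q.2 ≠ 0 ∧ PairLt mo so p q ∧ lmP mo q ≤ lmP mo p

/-- A TRP pair: a non-syzygy pair that is top reducible by no pair. -/
def IsTRP [NeZero d] (f : Fin d → MvPolynomial (Fin n) K) (mo : MonOrder n)
    (so : SigOrder n d) (p : PairT K n d) : Prop :=
  IsPair f p ∧ p.2 ≠ 0 ∧ ∀ q : PairT K n d, IsPair f q → ¬ TopRed mo so p q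

/-- Divisibility of signatures: `x^α E_i ∣ x^β E_j` iff `i = j` and `x^α ∣ x^β`. -/
def SigDvd {n d : ℕ} (s t : Sig n d) : Prop := s.2 = t.2 ∧ s.1 ≤ t.1

/-- A TRB pair: a TRP pair `p` such that no TRP pair similar to `p` has signature
properly dividing `sig p`. -/
def IsTRB [NeZero d] (f : Fin d → MvPolynomial (Fin n) K) (mo : MonOrder n)
    (so : SigOrder n d) (p : PairT K n d) : Prop :=
  IsTRP f mo so p ∧ ∀ q : PairT K n d, IsTRP f mo so q → Similar mo so p q →
    SigDvd (sigP so q) (sigP so p) → sigP so q = sigP so p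

/-- A signature is syzygy if it is the signature of a syzygy pair `(u, 0)`, `u ≠ 0`. -/
def IsSyzygySig [NeZero d] (f : Fin d → MvPolynomial (Fin n) K) (so : SigOrder n d)
    (s : Sig n d) : Prop :=
  ∃ u : Fin d → MvPolynomial (Fin n) K, u ≠ 0 ∧ IsPair f (u, 0) ∧ so.sig u = s

/-- The sub-order `≺_{s,i}` on monomials: `x^α ≺_{s,i} x^β` iff `x^α E_i ≺_s x^β E_i`. -/
def SubOrder {n d : ℕ} (so : SigOrder n d) (i : Fin d) (a b : Mon n) : Prop :=
  so.lt (a, i) (b, i)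

/-- The sub-order `≺_{s,i}` coincides with `≺_m`. -/
def EqOrders {n d : ℕ} (so : SigOrder n d) (mo : MonOrder n) (i : Fin d) : Prop :=
  ∀ a b : Mon n, SubOrder so i a b ↔ mo.lt a b

/-- `≺_m` and `≺_s` are almost compatible: either every sub-order `≺_{s,i}` coincides
with `≺_m`, or there is exactly one index `k` with `≺_{s,k} ≠ ≺_m`, and this `k`
satisfies `x^α E_k ≺_s E_i` for every monomial `x^α` and every index `i ≠ k`. -/
def AlmostCompatible {n d : ℕ} (mo : MonOrder n) (so : SigOrder n d) : Prop :=
  (∀ i, EqOrders so mo i) ∨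
  (∃ k, ¬ EqOrders so mo k ∧ (∀ i, i ≠ k → EqOrders so mo i) ∧
    ∀ (a : Mon n) (i : Fin d), i ≠ k → so.lt (a, k) ((0 : Mon n), i))

/-- `≺_m` and `≺_s` are compatible: `s₁ ⪯_s s₂` and `m₁ ⪯_m m₂` imply
`m₁·s₁ ⪯_s m₂·s₂`, with equality only when `s₁ = s₂` and `m₁ = m₂`. -/
def Compatible {n d : ℕ} (mo : MonOrder n) (so : SigOrder n d) : Prop :=
  ∀ (s₁ s₂ : Sig n d) (m₁ m₂ : Mon n), so.le s₁ s₂ → mo.le m₁ m₂ →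
    so.le (Sig.smul m₁ s₁) (Sig.smul m₂ s₂) ∧
    (Sig.smul m₁ s₁ = Sig.smul m₂ s₂ → s₁ = s₂ ∧ m₁ = m₂)

/-- The multiplied pair `m·p = (X^m · u, X^m · v)`. -/
noncomputable def mulPair (m : Mon n) (p : PairT K n d) : PairT K n d :=
  (fun i => monomial m (1 : K) * p.1 i, monomial m (1 : K) * p.2)

/-- `[m, p]` is the J-pair of the non-similar non-syzygy pairs `p₁, p₂`:
`p` is the `≺_p`-smaller of the two and `m·lm(p) = lcm(lm p₁, lm p₂)`. -/
def IsJPair [NeZero d] (mo : MonOrder n) (so : SigOrder n d) (p₁ p₂ : PairT K n d)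
    (m : Mon n) (p : PairT K n d) : Prop :=
  p₁.2 ≠ 0 ∧ p₂.2 ≠ 0 ∧ ¬ Similar mo so p₁ p₂ ∧
  ((PairLt mo so p₁ p₂ ∧ p = p₁) ∨ (PairLt mo so p₂ p₁ ∧ p = p₂)) ∧
  m + lmP mo p = lmP mo p₁ ⊔ lmP mo p₂

/-- `G` is a Gröbner basis of the ideal `⟨f₁,…,f_d⟩` w.r.t. `≺_m`: `G` consists of
elements of the ideal, and for every nonzero `v` in the ideal there is a nonzero
`g ∈ G` with `lm g ∣ lm v`. -/
def IsGroebnerBasis (mo : MonOrder n) (f : Fin d → MvPolynomial (Fin n) K)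
    (G : Set (MvPolynomial (Fin n) K)) : Prop :=
  (∀ g ∈ G, g ∈ Ideal.span (Set.range f)) ∧
  ∀ v ∈ Ideal.span (Set.range f), v ≠ 0 →
    ∃ g ∈ G, g ≠ 0 ∧ mo.lm g ≤ mo.lm v


/-! ### Auxiliary lemmas -/

section Aux

variable {n' d' : ℕ}

lemma SigOrder.asymm (so : SigOrder n' d') {s t : Sig n' d'} (h : so.lt s t) :
    ¬ so.lt t s := fun h' => so.irrefl s (so.trans _ _ _ h h')

lemma Sig.smul_smul (a b : Mon n') (s : Sig n' d') :
    Sig.smul a (Sig.smul b s) = Sig.smul (a + b) s := by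
  simp [Sig.smul, add_assoc]

/-- If `a ≤ b` componentwise then `(a, i) ⪯_s (b, i)`. -/
lemma SigOrder.le_of_mon_le (so : SigOrder n' d') {a b : Mon n'} (h : a ≤ b) (i : Fin d') :
    ((a, i) : Sig n' d') = (b, i) ∨ so.lt (a, i) (b, i) := by
  have h1 : Sig.smul (b - a) ((a, i) : Sig n' d') = (b, i) := by
    simp only [Sig.smul]
    rw [tsub_add_cancel_of_le h]
  have := so.le_smul (b - a) ((a, i) : Sig n' d')
  rw [h1] at this
  exact this

/-- There is no infinite strictly `≺_s`-descending chain of signatures. -/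
lemma no_descending_chain (so : SigOrder n' d') (c : ℕ → Sig n' d')
    (h : ∀ k, so.lt (c (k + 1)) (c k)) : False := by
  -- descending along any pair of indices
  have hlt : ∀ i j : ℕ, i < j → so.lt (c j) (c i) := by
    intro i j hij
    induction j with
    | zero => omega
    | succ j ih =>
      rcases Nat.lt_or_ge i j with h' | h'
      · exact so.trans _ _ _ (h j) (ih h')
      · have : i = j := by omega
        subst this; exact h i
  -- pigeonhole on the index component
  obtain ⟨ι, hι0⟩ := Finite.exists_infinite_fiber (fun k => (c k).2)
  have hι : ((fun k => (c k).2) ⁻¹' {ι}).Infinite := Set.infinite_coe_iff.mp hι0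
  -- extract a strictly increasing sequence of positions with constant index
  let next : ℕ → ℕ := fun a => (hι.exists_gt a).choose
  have hnext : ∀ a : ℕ, (c (next a)).2 = ι ∧ a < next a := by
    intro a
    obtain ⟨hb, hab⟩ := (hι.exists_gt a).choose_spec
    exact ⟨hb, hab⟩
  let φ : ℕ → ℕ := fun k => Nat.rec (next 0) (fun _ a => next a) k
  have hφι : ∀ k, (c (φ k)).2 = ι := by
    intro k
    cases k with
    | zero => exact (hnext 0).1
    | succ k => exact (hnext (φ k)).1
  have hφmono : ∀ k, φ k < φ (k + 1) := fun k => (hnext (φ k)).2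
  -- Dickson's lemma
  obtain ⟨m, m', hmm', hle⟩ :=
    (Set.isPWO_of_wellQuasiOrderedLE (Set.univ : Set (Mon n'))).exists_lt (f := fun k => (c (φ k)).1) (fun _ => Set.mem_univ _)
  have hφlt : φ m < φ m' := by
    clear hle
    induction m' with
    | zero => omega
    | succ j ih =>
      rcases Nat.lt_or_ge m j with h' | h'
      · exact lt_trans (ih h') (hφmono j)
      · have : m = j := by omega
        subst this; exact hφmono m
  have hdesc : so.lt (c (φ m')) (c (φ m)) := hlt _ _ hφlt
  have hcm : c (φ m) = ((c (φ m)).1, ι) := by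
    rw [← hφι m]
  have hcm' : c (φ m') = ((c (φ m')).1, ι) := by
    rw [← hφι m']
  rcases so.le_of_mon_le hle ι with heq | hlt'
  · rw [hcm, hcm', heq] at hdesc
    exact so.irrefl _ hdesc
  · rw [hcm, hcm'] at hdesc
    exact so.asymm hdesc hlt'

/-- Every nonempty set of signatures has a `≺_s`-minimal element. -/
lemma exists_min_sig (so : SigOrder n' d') (T : Set (Sig n' d')) (hT : T.Nonempty) :
    ∃ t ∈ T, ∀ t' ∈ T, ¬ so.lt t' t := by
  by_contra hcon
  push_neg at hcon
  have H : ∀ t : {x // x ∈ T}, ∃ t' : {x // x ∈ T}, so.lt t'.1 t.1 := by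
    intro ⟨t, ht⟩
    obtain ⟨t', ht', hlt⟩ := hcon t ht
    exact ⟨⟨t', ht'⟩, hlt⟩
  let step : {x // x ∈ T} → {x // x ∈ T} := fun t => (H t).choose
  have hstep : ∀ t, so.lt (step t).1 t.1 := fun t => (H t).choose_spec
  let c : ℕ → {x // x ∈ T} := fun k => Nat.rec ⟨hT.choose, hT.choose_spec⟩ (fun _ t => step t) k
  exact no_descending_chain so (fun k => (c k).1) (fun k => hstep (c k))

/-- The total degree of a monomial. -/
noncomputable def mdeg (m : Mon n') : ℕ := m.sum fun _ e => e

lemma mdeg_lt_of_lt {a b : Mon n'} (hle : a ≤ b) (hne : a ≠ b) : mdeg a < mdeg b := by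
  have hb : a + (b - a) = b := add_tsub_cancel_of_le hle
  have hm0 : b - a ≠ 0 := by
    intro h0
    apply hne
    rw [← hb, h0, add_zero]
  have hmdeg : mdeg b = mdeg a + mdeg (b - a) := by
    unfold mdeg
    conv_lhs => rw [← hb]
    exact Finsupp.sum_add_index' (fun _ => rfl) (fun _ _ _ => rfl)
  have hpos : 0 < mdeg (b - a) := by
    rcases Nat.eq_zero_or_pos (mdeg (b - a)) with h0 | h0
    · exfalso
      apply hm0
      ext i
      by_contra hi
      have hmem : i ∈ (b - a).support := Finsupp.mem_support_iff.mpr (by simpa using hi)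
      have := Finset.sum_eq_zero_iff.mp h0 i hmem
      simp at this
      exact hi (by simpa using this)
    · exact h0
  omega

end Aux

section Main

variable [NeZero d]

/-- Every non-syzygy pair with `lm p ∣ w` is top-reducible (staying within divisors of `w`)
or TRP: existence of a TRP pair with `lm` dividing a given monomial. -/
lemma exists_TRP (mo : MonOrder n) (so : SigOrder n d) (f : Fin d → MvPolynomial (Fin n) K)
    (w : Mon n) (p₀ : PairT K n d) (h₀ : IsPair f p₀) (h₀2 : p₀.2 ≠ 0)
    (h₀lm : lmP mo p₀ ≤ w) :
    ∃ p : PairT K n d, IsTRP f mo so p ∧ lmP mo p ≤ w := by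
  classical
  set S : Set (PairT K n d) :=
    {p | IsPair f p ∧ p.2 ≠ 0 ∧ lmP mo p ≤ w} with hS
  set tmap : PairT K n d → Sig n d := fun p => Sig.smul (w - lmP mo p) (sigP so p) with htmap
  have hSne : (tmap '' S).Nonempty := ⟨tmap p₀, ⟨p₀, ⟨h₀, h₀2, h₀lm⟩, rfl⟩⟩
  obtain ⟨t, ⟨p, hpS, hpt⟩, hmin⟩ := exists_min_sig so (tmap '' S) hSne
  refine ⟨p, ⟨hpS.1, hpS.2.1, ?_⟩, hpS.2.2⟩
  rintro q hq ⟨hp2, hq2, hlt, hdvd⟩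
  have hqS : q ∈ S := ⟨hq, hq2, le_trans hdvd hpS.2.2⟩
  -- show `tmap q ≺_s tmap p`, contradicting minimality
  set a : Mon n := w - lmP mo p with ha'
  set b : Mon n := w - lmP mo q with hb'
  have ha : a + lmP mo p = w := by
    rw [ha', add_comm]
    exact add_tsub_cancel_of_le hpS.2.2
  have hb : b + lmP mo q = w := by
    rw [hb', add_comm]
    exact add_tsub_cancel_of_le hqS.2.2
  have key := so.smul_lt_smul (a + b) _ _ hlt
  rw [Sig.smul_smul, Sig.smul_smul] at key
  have e1 : a + b + lmP mo p = w + b := by rw [← ha]; abel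
  have e2 : a + b + lmP mo q = w + a := by rw [← hb]; abel
  rw [e1, e2] at key
  have key' : so.lt (Sig.smul w (tmap q)) (Sig.smul w (tmap p)) := by
    rw [htmap, Sig.smul_smul, Sig.smul_smul]
    exact key
  have hqlt : so.lt (tmap q) (tmap p) := by
    rcases so.total (tmap q) (tmap p) with h | h | h
    · exact h
    · exfalso; rw [h] at key'; exact so.irrefl _ key'
    · exact absurd key' (so.asymm (so.smul_lt_smul w _ _ h))
  rw [hpt] at hqlt
  exact hmin (tmap q) ⟨q, hqS, rfl⟩ hqlt

/-- From a TRP pair with `lm` dividing `w`, obtain a TRB pair with `lm` dividing `w`. -/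
lemma exists_TRB_of_TRP (mo : MonOrder n) (so : SigOrder n d)
    (f : Fin d → MvPolynomial (Fin n) K) (w : Mon n) :
    ∀ N : ℕ, ∀ p : PairT K n d, mdeg (sigP so p).1 ≤ N → IsTRP f mo so p →
      lmP mo p ≤ w → ∃ q : PairT K n d, IsTRB f mo so q ∧ lmP mo q ≤ w := by
  intro N
  induction N with
  | zero =>
    intro p hdeg hTRP hlm
    refine ⟨p, ⟨hTRP, ?_⟩, hlm⟩
    intro q hq hsim hdvd
    by_contra hne
    have hlt := mdeg_lt_of_lt hdvd.2 (by
      intro h; exact hne (Prod.ext h hdvd.1))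
    omega
  | succ N ih =>
    intro p hdeg hTRP hlm
    by_cases hTRB : ∀ q : PairT K n d, IsTRP f mo so q → Similar mo so p q →
        SigDvd (sigP so q) (sigP so p) → sigP so q = sigP so p
    · exact ⟨p, ⟨hTRP, hTRB⟩, hlm⟩
    · push_neg at hTRB
      obtain ⟨q, hqTRP, hsim, hdvd, hne⟩ := hTRB
      have hne1 : (sigP so q).1 ≠ (sigP so p).1 := by
        intro h; exact hne (Prod.ext h hdvd.1)
      have hdeglt : mdeg (sigP so q).1 < mdeg (sigP so p).1 := mdeg_lt_of_lt hdvd.2 hne1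
      -- lm q ≤ lm p from similarity and divisibility of signatures
      have hsim1 : lmP mo p + (sigP so q).1 = lmP mo q + (sigP so p).1 :=
        congrArg Prod.fst hsim
      have hlmq : lmP mo q ≤ lmP mo p := by
        rw [Finsupp.le_def]
        intro i
        have h1 := DFunLike.congr_fun hsim1 i
        have h2 := Finsupp.le_def.mp hdvd.2 i
        simp only [Finsupp.add_apply] at h1
        omega
      exact ih q (by omega) hqTRP (le_trans hlmq hlm)

end Main

/-- For every nonzero polynomial `v` in the ideal `⟨f₁,…,f_d⟩`, there exists
a TRB pair `p` such that `lm p` divides `lm v`. Consequently the set of polynomial parts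
`{ v' : (u',v') is a TRB pair }` is a Gröbner basis of `⟨f₁,…,f_d⟩` w.r.t. `≺_m`. -/
theorem TRB_polys_groebnerBasis {K : Type*} [Field K] {n d : ℕ} [NeZero d]
    (mo : MonOrder n) (so : SigOrder n d) (f : Fin d → MvPolynomial (Fin n) K) :
    (∀ v : MvPolynomial (Fin n) K, v ∈ Ideal.span (Set.range f) → v ≠ 0 →
      ∃ p : PairT K n d, IsTRB f mo so p ∧ lmP mo p ≤ mo.lm v) ∧
    IsGroebnerBasis mo f
      {v' : MvPolynomial (Fin n) K |
        ∃ u' : Fin d → MvPolynomial (Fin n) K, IsTRB f mo so (u', v')} := by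
  have main : ∀ v : MvPolynomial (Fin n) K, v ∈ Ideal.span (Set.range f) → v ≠ 0 →
      ∃ p : PairT K n d, IsTRB f mo so p ∧ lmP mo p ≤ mo.lm v := by
    intro v hv hv0
    obtain ⟨u, hu⟩ := Ideal.mem_span_range_iff_exists_fun.mp hv
    obtain ⟨p, hpTRP, hplm⟩ := exists_TRP mo so f (mo.lm v) (u, v) hu hv0 le_rfl
    exact exists_TRB_of_TRP mo so f (mo.lm v) (mdeg (sigP so p).1) p le_rfl hpTRP hplm
  refine ⟨main, ?_, ?_⟩
  · rintro g ⟨u', hTRB⟩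
    have hpair : ∑ i, u' i * f i = g := hTRB.1.1
    rw [← hpair]
    exact Ideal.sum_mem _ fun i _ =>
      Ideal.mul_mem_left _ _ (Ideal.subset_span ⟨i, rfl⟩)
  · intro v hv hv0
    obtain ⟨p, hpTRB, hplm⟩ := main v hv hv0
    refine ⟨p.2, ⟨p.1, by rwa [Prod.mk.eta]⟩, hpTRB.1.2.1, hplm⟩

end TRB
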